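/- Let S̃ : M₃ × ℝ³ → M₃ be continuously differentiable. Fix x₀ ∈ ℝ³, matrices A, B ∈ M₃, and vectors a, b, c ∈ ℝ³. Let F : ℝ³ × [0, T) → M₃, v : ℝ³ × [0, T) → ℝ³, and p : ℝ³ × [0, T) → ℝ³ be continuously differentiable functions such that: ∂_t F_{ij}(x,t) = ∂_j v_i(x,t) and ∂_t p_i(x,t) = Σ_j ∂_j (S̃_{ij}(F(x,t), v(x,t))) for all (x,t), with initial data F(x, 0) = A + (a·(x − x₀)) (b ⊗ a) and v(x, 0) = B(x − x₀) + c. Then ∂_t F(x₀, 0) = B and ∂_t p_i(x₀, 0) = Σ_{k,j} (∂S̃_{ij}/∂v_k)(A, c) B_{kj} + Σ_h E_{ih}(A, c; a) b_h, where E_{ih}(A, c; a) := Σ_{j,k} (∂S̃_{ij}/∂F_{hk})(A, c) a_j a_k. -/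

import Mathlib

open scoped RealInnerProductSpace

noncomputable section

abbrev M3 : Type := EuclideanSpace ℝ (Fin 3 × Fin 3)
abbrev R3 : Type := EuclideanSpace ℝ (Fin 3)


private lemma euc_sum_apply' {κ ι : Type*} [Fintype ι] (s : Finset κ)
    (f : κ → EuclideanSpace ℝ ι) (i : ι) :
    (∑ k ∈ s, f k) i = ∑ k ∈ s, f k i :=
  map_sum (EuclideanSpace.proj (𝕜 := ℝ) i) f s

private lemma euc_decomp' {ι : Type*} [Fintype ι] [DecidableEq ι] (w : EuclideanSpace ℝ ι) :
    w = ∑ k, w k • EuclideanSpace.single k (1:ℝ) := by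
  refine (WithLp.equiv 2 _).injective (funext fun i => ?_)
  show w i = (∑ k, w k • EuclideanSpace.single k (1:ℝ)) i
  rw [euc_sum_apply']
  simp [EuclideanSpace.single_apply]

/-- Computational core of Proposition 1: for a classical solution of
`Ḟ = ∇v`, `ṗ = Div S̃(F,v)` on `ℝ³ × [0,T)` with the affine/quadratic initial data
`F(x,0) = A + (a·(x−x₀))(b⊗a)`, `v(x,0) = B(x−x₀) + c`, the initial time-rates at `x₀` are
`Ḟ(x₀,0) = B` and `ṗ_i(x₀,0) = Σ_{k,j} ∂S̃_{ij}/∂v_k(A,c) B_{kj} + Σ_h E_{ih}(A,c;a) b_h`,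
where `E_{ih}(A,c;a) = Σ_{j,k} ∂S̃_{ij}/∂F_{hk}(A,c) a_j a_k` is the ellipticity matrix. -/
theorem stmt10 (T : ℝ) (hT : 0 < T)
    (St : M3 → R3 → M3)
    (hSt : ContDiff ℝ 1 (fun q : M3 × R3 => St q.1 q.2))
    (x₀ : R3) (A B : M3) (a b c : R3)
    (F : R3 → ℝ → M3) (v : R3 → ℝ → R3) (p : R3 → ℝ → R3)
    (hF : ContDiffOn ℝ 1 (fun q : R3 × ℝ => F q.1 q.2) (Set.univ ×ˢ Set.Ico 0 T))
    (hv : ContDiffOn ℝ 1 (fun q : R3 × ℝ => v q.1 q.2) (Set.univ ×ˢ Set.Ico 0 T))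
    (hp : ContDiffOn ℝ 1 (fun q : R3 × ℝ => p q.1 q.2) (Set.univ ×ˢ Set.Ico 0 T))
    (heqF : ∀ (x : R3), ∀ t ∈ Set.Ico (0 : ℝ) T, ∀ i j : Fin 3,
      derivWithin (fun s => F x s (i, j)) (Set.Ici 0) t
        = fderiv ℝ (fun y => v y t i) x (EuclideanSpace.single j 1))
    (heqp : ∀ (x : R3), ∀ t ∈ Set.Ico (0 : ℝ) T, ∀ i : Fin 3,
      derivWithin (fun s => p x s i) (Set.Ici 0) t
        = ∑ j, fderiv ℝ (fun y => St (F y t) (v y t) (i, j)) x (EuclideanSpace.single j 1))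
    (hF0 : ∀ (x : R3) (i j : Fin 3),
      F x 0 (i, j) = A (i, j) + (∑ k, a k * (x - x₀) k) * (b i * a j))
    (hv0 : ∀ (x : R3) (i : Fin 3),
      v x 0 i = (∑ j, B (i, j) * (x - x₀) j) + c i) :
    (∀ i j : Fin 3, derivWithin (fun s => F x₀ s (i, j)) (Set.Ici 0) 0 = B (i, j)) ∧
    (∀ i : Fin 3,
      derivWithin (fun s => p x₀ s i) (Set.Ici 0) 0
        = (∑ k, ∑ j,
            fderiv ℝ (fun u : R3 => St A u (i, j)) c (EuclideanSpace.single k 1) * B (k, j))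
          + ∑ h, (∑ j, ∑ k,
              fderiv ℝ (fun G : M3 => St G c (i, j)) A (EuclideanSpace.single (h, k) 1)
                * (a j * a k)) * b h) := by
  classical
  have hmem : (0:ℝ) ∈ Set.Ico 0 T := ⟨le_refl 0, hT⟩
  -- the spatial derivative of v(·,0)
  set L2 : R3 →L[ℝ] R3 :=
    ∑ k : Fin 3, (∑ j : Fin 3, B (k, j) • EuclideanSpace.proj j).smulRight
      (EuclideanSpace.single k 1) with hL2def
  have hL2apply : ∀ (y : R3) (i : Fin 3), L2 y i = ∑ j, B (i, j) * y j := by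
    intro y i
    rw [hL2def, ContinuousLinearMap.sum_apply, euc_sum_apply']
    simp [EuclideanSpace.single_apply, mul_ite, Finset.sum_ite_eq]
  have hvfun : ∀ i : Fin 3, (fun y : R3 => v y 0 i) = fun y => L2 y i + (c i - L2 x₀ i) := by
    intro i; funext y
    rw [hv0, hL2apply, hL2apply]
    simp only [PiLp.sub_apply, mul_sub, Finset.sum_sub_distrib]
    ring
  have hvd : ∀ (i : Fin 3) (x : R3),
      HasFDerivAt (fun y : R3 => v y 0 i) ((EuclideanSpace.proj i).comp L2) x := by
    intro i x
    rw [hvfun i]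
    have h := (((EuclideanSpace.proj i).comp L2).hasFDerivAt (x := x)).add_const
      (c i - L2 x₀ i)
    exact h
  have part1 : ∀ i j : Fin 3,
      derivWithin (fun s => F x₀ s (i, j)) (Set.Ici 0) 0 = B (i, j) := by
    intro i j
    rw [heqF x₀ 0 hmem i j, (hvd i x₀).fderiv]
    show L2 (EuclideanSpace.single j 1) i = B (i, j)
    rw [hL2apply]
    simp [EuclideanSpace.single_apply, mul_ite, Finset.sum_ite_eq']
  refine ⟨part1, ?_⟩
  -- part 2
  set Ls : R3 →L[ℝ] ℝ := ∑ k : Fin 3, a k • EuclideanSpace.proj k with hLsdef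
  have hLsapply : ∀ y : R3, Ls y = ∑ k, a k * y k := by
    intro y; rw [hLsdef]; simp [ContinuousLinearMap.sum_apply]
  set ba : M3 := ∑ q : Fin 3 × Fin 3, (b q.1 * a q.2) • EuclideanSpace.single q 1 with hbadef
  have hbaapp : ∀ q : Fin 3 × Fin 3, ba q = b q.1 * a q.2 := by
    intro q
    rw [hbadef, euc_sum_apply']
    simp [EuclideanSpace.single_apply, mul_ite, Finset.sum_ite_eq]
  have hFfun : (fun y : R3 => F y 0) = fun y => (Ls y - Ls x₀) • ba + A := by
    funext y
    refine (WithLp.equiv 2 _).injective (funext fun q => ?_)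
    obtain ⟨i, j⟩ := q
    show F y 0 (i, j) = ((Ls y - Ls x₀) • ba + A) (i, j)
    rw [hF0, PiLp.add_apply, PiLp.smul_apply, hbaapp, hLsapply, hLsapply]
    simp only [smul_eq_mul, PiLp.sub_apply, mul_sub, Finset.sum_sub_distrib]
    ring
  have hFd : HasFDerivAt (fun y : R3 => F y 0) (Ls.smulRight ba) x₀ := by
    rw [hFfun]
    exact ((Ls.hasFDerivAt.sub_const (Ls x₀)).smul_const ba).add_const A
  have hvvecfun : (fun y : R3 => v y 0) = fun y => L2 y + (c - L2 x₀) := by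
    funext y
    refine (WithLp.equiv 2 _).injective (funext fun i => ?_)
    show v y 0 i = (L2 y + (c - L2 x₀)) i
    rw [hv0, PiLp.add_apply, PiLp.sub_apply, hL2apply, hL2apply]
    simp only [PiLp.sub_apply, mul_sub, Finset.sum_sub_distrib]
    ring
  have hvecd : HasFDerivAt (fun y : R3 => v y 0) L2 x₀ := by
    rw [hvvecfun]; exact L2.hasFDerivAt.add_const _
  have hPhi : HasFDerivAt (fun y : R3 => ((F y 0 : M3), (v y 0 : R3)))
      ((Ls.smulRight ba).prod L2) x₀ := hFd.prodMk hvecd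
  have hFx0 : F x₀ 0 = A := by
    refine (WithLp.equiv 2 _).injective (funext fun q => ?_)
    obtain ⟨i, j⟩ := q
    show F x₀ 0 (i, j) = A (i, j)
    rw [hF0]; simp
  have hvx0 : v x₀ 0 = c := by
    refine (WithLp.equiv 2 _).injective (funext fun i => ?_)
    show v x₀ 0 i = c i
    rw [hv0]; simp
  set S : M3 × R3 → M3 := fun q => St q.1 q.2 with hSdef
  set DS : M3 × R3 →L[ℝ] M3 := fderiv ℝ S (A, c) with hDSdef
  have hSd : HasFDerivAt S DS (A, c) := (hSt.differentiable one_ne_zero (A, c)).hasFDerivAt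
  have hSd' : HasFDerivAt S DS (F x₀ 0, v x₀ 0) := by rw [hFx0, hvx0]; exact hSd
  have hcomp : HasFDerivAt (fun y : R3 => S (F y 0, v y 0))
      (DS.comp ((Ls.smulRight ba).prod L2)) x₀ := by have := HasFDerivAt.comp x₀ hSd' hPhi; exact this
  have hpartF : ∀ (i j : Fin 3) (u : M3),
      fderiv ℝ (fun G : M3 => St G c (i, j)) A u = DS (u, 0) (i, j) := by
    intro i j u
    have h1 : HasFDerivAt (fun G : M3 => ((G : M3), (c : R3)))
        ((ContinuousLinearMap.id ℝ M3).prod 0) A :=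
      (hasFDerivAt_id A).prodMk (hasFDerivAt_const c A)
    have h2 := ((EuclideanSpace.proj ((i, j) : Fin 3 × Fin 3)).hasFDerivAt).comp A
      (hSd.comp A h1)
    have h3 : fderiv ℝ (fun G : M3 => St G c (i, j)) A
        = ((EuclideanSpace.proj ((i, j) : Fin 3 × Fin 3)).comp
            (DS.comp ((ContinuousLinearMap.id ℝ M3).prod 0))) := h2.fderiv
    rw [h3]
    simp [ContinuousLinearMap.comp_apply, ContinuousLinearMap.prod_apply]
  have hpartv : ∀ (i j : Fin 3) (w : R3),
      fderiv ℝ (fun u : R3 => St A u (i, j)) c w = DS (0, w) (i, j) := by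
    intro i j w
    have h1 : HasFDerivAt (fun u : R3 => ((A : M3), (u : R3)))
        ((0 : R3 →L[ℝ] M3).prod (ContinuousLinearMap.id ℝ R3)) c :=
      (hasFDerivAt_const A c).prodMk (hasFDerivAt_id c)
    have h2 := ((EuclideanSpace.proj ((i, j) : Fin 3 × Fin 3)).hasFDerivAt).comp c
      (hSd.comp c h1)
    have h3 : fderiv ℝ (fun u : R3 => St A u (i, j)) c
        = ((EuclideanSpace.proj ((i, j) : Fin 3 × Fin 3)).comp
            (DS.comp ((0 : R3 →L[ℝ] M3).prod (ContinuousLinearMap.id ℝ R3)))) := h2.fderiv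
    rw [h3]
    simp [ContinuousLinearMap.comp_apply, ContinuousLinearMap.prod_apply]
  have hLssingle : ∀ j : Fin 3, Ls (EuclideanSpace.single j 1) = a j := by
    intro j; rw [hLsapply]
    simp [EuclideanSpace.single_apply, mul_ite, Finset.sum_ite_eq']
  have hL2single : ∀ j k : Fin 3, L2 (EuclideanSpace.single j 1) k = B (k, j) := by
    intro j k; rw [hL2apply]
    simp [EuclideanSpace.single_apply, mul_ite, Finset.sum_ite_eq']
  have hsplit : ∀ (u : M3) (w : R3), DS (u, w) = DS (u, 0) + DS (0, w) := by
    intro u w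
    rw [← map_add, Prod.mk_add_mk, add_zero, zero_add]
  have hDSF : ∀ (u : M3), DS (u, (0 : R3))
      = ∑ q : Fin 3 × Fin 3, u q • DS (EuclideanSpace.single q 1, (0 : R3)) := by
    intro u
    have hpair : ((u : M3), (0 : R3))
        = ∑ q : Fin 3 × Fin 3, u q • ((EuclideanSpace.single q (1:ℝ) : M3), (0 : R3)) := by
      refine Prod.ext ?_ ?_
      · simp only [Prod.fst_sum, Prod.smul_mk]
        exact euc_decomp' u
      · simp [Prod.snd_sum, Prod.smul_mk]
    rw [hpair, map_sum]
    refine Finset.sum_congr rfl fun q _ => ?_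
    rw [← map_smul]
  have hDSv : ∀ (w : R3), DS ((0 : M3), w)
      = ∑ k : Fin 3, w k • DS ((0 : M3), EuclideanSpace.single k 1) := by
    intro w
    have hpair : ((0 : M3), (w : R3))
        = ∑ k : Fin 3, w k • ((0 : M3), (EuclideanSpace.single k (1:ℝ) : R3)) := by
      refine Prod.ext ?_ ?_
      · simp [Prod.fst_sum, Prod.smul_mk]
      · simp only [Prod.snd_sum, Prod.smul_mk]
        exact euc_decomp' w
    rw [hpair, map_sum]
    refine Finset.sum_congr rfl fun k _ => ?_
    rw [← map_smul]
  intro i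
  rw [heqp x₀ 0 hmem i]
  have key : ∀ j : Fin 3,
      fderiv ℝ (fun y => St (F y 0) (v y 0) (i, j)) x₀ (EuclideanSpace.single j 1)
        = DS ((Ls.smulRight ba) (EuclideanSpace.single j 1),
              L2 (EuclideanSpace.single j 1)) (i, j) := by
    intro j
    have h2 := ((EuclideanSpace.proj ((i, j) : Fin 3 × Fin 3)).hasFDerivAt).comp x₀ hcomp
    have h3 : fderiv ℝ (fun y => St (F y 0) (v y 0) (i, j)) x₀
        = (EuclideanSpace.proj ((i, j) : Fin 3 × Fin 3)).comp
            (DS.comp ((Ls.smulRight ba).prod L2)) := h2.fderiv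
    rw [h3]
    simp [ContinuousLinearMap.comp_apply, ContinuousLinearMap.prod_apply]
  have hterm1 : ∀ j : Fin 3, DS ((a j • ba : M3), (0 : R3)) (i, j)
      = a j * ∑ h, ∑ k, DS ((EuclideanSpace.single (h, k) 1 : M3), (0 : R3)) (i, j)
          * (b h * a k) := by
    intro j
    rw [hDSF, euc_sum_apply', Fintype.sum_prod_type]
    simp only [Finset.mul_sum]
    refine Finset.sum_congr rfl fun h _ => Finset.sum_congr rfl fun k _ => ?_
    rw [PiLp.smul_apply, PiLp.smul_apply, hbaapp]
    simp only [smul_eq_mul]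
    ring
  have hterm2 : ∀ j : Fin 3, DS ((0 : M3), L2 (EuclideanSpace.single j 1)) (i, j)
      = ∑ k, B (k, j) * DS ((0 : M3), EuclideanSpace.single k 1) (i, j) := by
    intro j
    rw [hDSv, euc_sum_apply']
    refine Finset.sum_congr rfl fun k _ => ?_
    rw [PiLp.smul_apply, hL2single]
    simp [smul_eq_mul]
  have step1 : ∑ j, fderiv ℝ (fun y => St (F y 0) (v y 0) (i, j)) x₀
        (EuclideanSpace.single j 1)
      = ∑ j, (a j * ∑ h, ∑ k, DS ((EuclideanSpace.single (h, k) 1 : M3), (0 : R3)) (i, j)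
            * (b h * a k)
          + ∑ k, B (k, j) * DS ((0 : M3), EuclideanSpace.single k 1) (i, j)) := by
    refine Finset.sum_congr rfl fun j _ => ?_
    rw [key j]
    have hsr : (Ls.smulRight ba) (EuclideanSpace.single j 1) = a j • ba := by
      rw [ContinuousLinearMap.smulRight_apply, hLssingle]
    rw [hsr, hsplit, PiLp.add_apply, hterm1, hterm2]
  rw [step1]
  simp only [hpartv, hpartF]
  rw [Finset.sum_add_distrib, add_comm]
  congr 1
  · -- v part
    rw [Finset.sum_comm]
    refine Finset.sum_congr rfl fun k _ => Finset.sum_congr rfl fun j _ => mul_comm _ _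
  · -- F part
    simp only [Finset.mul_sum]
    rw [Finset.sum_comm]
    refine Finset.sum_congr rfl fun h _ => ?_
    rw [Finset.sum_mul]
    refine Finset.sum_congr rfl fun j _ => ?_
    rw [Finset.sum_mul]
    refine Finset.sum_congr rfl fun k _ => ?_
    ring
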